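/- Consider the following OSD instance. The metric space is the star with center c and points p_0, p_1, …, p_{n−1} (n ≥ 2), where d(p_0,c) = W for some W ≥ 1, d(p_i,c) = 1 for 1 ≤ i ≤ n−1, and distances between points are sums along the star. The server starts at p_0. For each 1 ≤ i ≤ n−1 there is a request at p_i arriving at time 0 with penalty function f(t) = (W+1)^{i+1}·t; in addition, p_0 receives a request arriving at time 0 and a request arriving at each time (W+1)^{−i} for i = 0,1,…,n−2, each with penalty function f(t) = L·t, where L ≥ 0 is an arbitrary parameter. Then, for every value of L, this instance admits a schedule of total cost at most 2(n+W): serve the request at p_0 at time 0, immediately (at time 0) tour p_1,…,p_{n−1} and return to p_0, and serve every later request at p_0 at its arrival time. -/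

import Mathlib

/-- A request in the online service with delay (OSD) problem: a point of the
metric space, an arrival time, and a nondecreasing, nonnegative delay penalty
function (given on `ℝ`, extended below `0`; only nonnegative arguments are
ever used). -/
structure OSDRequest (M : Type) where
  point : M
  arrival : ℝ
  arrival_nonneg : 0 ≤ arrival
  penalty : ℝ → ℝ
  penalty_nonneg : ∀ t, 0 ≤ penalty t
  penalty_mono : Monotone penalty

/-- A schedule is a finite sequence of timestamped moves with nondecreasing,
nonnegative timestamps. -/
def ValidSchedule {M : Type} (S : List (ℝ × M)) : Prop :=
  S.Chain' (fun a b => a.1 ≤ b.1) ∧ ∀ mv ∈ S, 0 ≤ mv.1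

/-- A schedule serves a request if some move is at the request's point, at a
time no earlier than its arrival. -/
def ServesReq {M : Type} (S : List (ℝ × M)) (r : OSDRequest M) : Prop :=
  ∃ mv ∈ S, r.arrival ≤ mv.1 ∧ mv.2 = r.point

/-- The service time of a request: the smallest timestamp of a serving move. -/
noncomputable def serveTime {M : Type} (S : List (ℝ × M)) (r : OSDRequest M) : ℝ :=
  sInf {t : ℝ | ∃ mv ∈ S, mv.1 = t ∧ r.arrival ≤ t ∧ mv.2 = r.point}

/-- Movement cost of a schedule, starting from a given position, w.r.t. a
distance function `d`. -/
noncomputable def moveCost {M : Type} (d : M → M → ℝ) : M → List (ℝ × M) → ℝ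
  | _, [] => 0
  | q, mv :: rest => d q mv.2 + moveCost d mv.2 rest

/-- Total cost of a schedule: movement cost plus total delay penalty. -/
noncomputable def schedCost {M : Type} (d : M → M → ℝ) (q0 : M)
    (I : Finset (OSDRequest M)) (S : List (ℝ × M)) : ℝ :=
  moveCost d q0 S + ∑ r ∈ I, r.penalty (serveTime S r - r.arrival)

/-- A schedule for an instance: valid and serving every request. -/
def IsSchedule {M : Type} (I : Finset (OSDRequest M)) (S : List (ℝ × M)) : Prop :=
  ValidSchedule S ∧ ∀ r ∈ I, ServesReq S r

/-- The optimal (offline) cost of an instance. -/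
noncomputable def OPT {M : Type} (d : M → M → ℝ) (q0 : M)
    (I : Finset (OSDRequest M)) : ℝ :=
  sInf {c : ℝ | ∃ S : List (ℝ × M), IsSchedule I S ∧ schedCost d q0 I S = c}

/-- All requests of the instance arrive at allowed points. -/
def OKInst {M : Type} (P : M → Prop) (I : Finset (OSDRequest M)) : Prop :=
  ∀ r ∈ I, P r.point
/-- The star metric on center `none` and points `some i` (`i : Fin n`), where
`p 0` is at distance `W` from the center and every other point at distance `1`. -/
noncomputable def starVtr (n : ℕ) (W : ℝ) : Option (Fin n) → ℝ
  | none => 0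
  | some i => if (i : ℕ) = 0 then W else 1

noncomputable def starDist (n : ℕ) (W : ℝ) (x y : Option (Fin n)) : ℝ :=
  if x = y then 0 else starVtr n W x + starVtr n W y

/-- The instance of Fig. 1: for each `1 ≤ i ≤ n-1`, a request at `p i` arriving
at time `0` with penalty `(W+1)^(i+1)·t`; at `p 0`, a request arriving at time
`0` and one arriving at each time `(W+1)^(-j)`, `j = 0,…,n-2`, with penalty
rate `L`. -/
def Stmt8Inst (n : ℕ) (W L : ℝ) (r : OSDRequest (Option (Fin n))) : Prop :=
  (∃ i : Fin n, 1 ≤ (i : ℕ) ∧ r.point = some i ∧ r.arrival = 0 ∧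
      r.penalty = fun t => (W + 1) ^ ((i : ℕ) + 1) * max t 0) ∨
  ((∃ i0 : Fin n, (i0 : ℕ) = 0 ∧ r.point = some i0) ∧
      r.penalty = (fun t => L * max t 0) ∧
      (r.arrival = 0 ∨ ∃ j : ℕ, j ≤ n - 2 ∧ r.arrival = (W + 1) ^ (-(j : ℤ))))

section Aux

variable {M : Type}

lemma moveCost_append' (d : M → M → ℝ) (l2 l1 : List (ℝ × M)) :
    ∀ (q : M),
      moveCost d q (l1 ++ l2) =
        moveCost d q l1 + moveCost d (l1.foldl (fun _ mv => mv.2) q) l2 := by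
  induction l1 with
  | nil => intro q; simp [moveCost]
  | cons mv rest ih =>
    intro q
    rw [List.cons_append]
    simp only [moveCost, List.foldl_cons]
    rw [ih mv.2]
    ring

lemma moveCost_const (d : M → M → ℝ) (p : M) (hd : d p p = 0) :
    ∀ (l : List (ℝ × M)), (∀ mv ∈ l, mv.2 = p) → moveCost d p l = 0
  | [], _ => by simp [moveCost]
  | mv :: rest, h => by
    have h2 : mv.2 = p := h mv (by simp)
    simp only [moveCost, h2, hd, zero_add]
    exact moveCost_const d p hd rest (fun x hx => h x (by simp [hx]))

lemma foldl_pt_prop (P : M → Prop) :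
    ∀ (l : List (ℝ × M)) (q : M), P q → (∀ mv ∈ l, P mv.2) →
      P (l.foldl (fun _ mv => mv.2) q)
  | [], q, hq, _ => hq
  | mv :: rest, q, hq, h => by
    simp only [List.foldl_cons]
    exact foldl_pt_prop P rest mv.2 (h mv (by simp)) (fun x hx => h x (by simp [hx]))

lemma serveTime_le' (S : List (ℝ × M)) (r : OSDRequest M)
    (mv : ℝ × M) (hmem : mv ∈ S) (ht : mv.1 = r.arrival) (hp : mv.2 = r.point) :
    serveTime S r ≤ r.arrival := by
  apply csInf_le
  · refine ⟨r.arrival, ?_⟩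
    rintro t ⟨mv', _, rfl, hle, _⟩
    exact hle
  · exact ⟨mv, hmem, ht, le_refl _, hp⟩

end Aux

lemma starVtr_nonneg (n : ℕ) (W : ℝ) (hW : 0 ≤ W) (x : Option (Fin n)) :
    0 ≤ starVtr n W x := by
  cases x with
  | none => simp [starVtr]
  | some i =>
    simp only [starVtr]
    split
    · exact hW
    · norm_num

lemma starDist_le (n : ℕ) (W : ℝ) (hW : 0 ≤ W) (x y : Option (Fin n)) :
    starDist n W x y ≤ starVtr n W x + starVtr n W y := by
  unfold starDist
  split
  · exact add_nonneg (starVtr_nonneg n W hW x) (starVtr_nonneg n W hW y)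
  · exact le_refl _

lemma moveCost_star_le (n : ℕ) (W : ℝ) (hW : 0 ≤ W) :
    ∀ (l : List (ℝ × Option (Fin n))) (q : Option (Fin n)),
      moveCost (starDist n W) q l ≤
        starVtr n W q + 2 * (l.map (fun mv => starVtr n W mv.2)).sum
  | [], q => by simpa [moveCost] using starVtr_nonneg n W hW q
  | mv :: rest, q => by
    simp only [moveCost, List.map_cons, List.sum_cons]
    have h1 := starDist_le n W hW q mv.2
    have h2 := moveCost_star_le n W hW rest mv.2
    nlinarith [h1, h2]


/-- For every value of the rate `L`, the instance above admits
a schedule of total cost at most `2(n + W)` (serve everything at time `0` by a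
tour from `p 0` through `p 1, …, p (n-1)` and back, then serve each later
request at `p 0` at its arrival time). -/
theorem star_instance_cheap_schedule (n : ℕ) (W L : ℝ) (hn : 2 ≤ n) (hW : 1 ≤ W)
    (hL : 0 ≤ L)
    (I : Finset (OSDRequest (Option (Fin n))))
    (hI : ∀ r, r ∈ I ↔ Stmt8Inst n W L r)
    (i0 : Fin n) (hi0 : (i0 : ℕ) = 0) :
    ∃ S : List (ℝ × Option (Fin n)), IsSchedule I S ∧
      schedCost (starDist n W) (some i0) I S ≤ 2 * ((n : ℝ) + W) := by
  have hW0 : (0:ℝ) ≤ W := le_trans zero_le_one hW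
  have hW1 : (1:ℝ) ≤ W + 1 := by linarith
  have hW1' : (0:ℝ) < W + 1 := by linarith
  -- the schedule
  set tourMid : List (ℝ × Option (Fin n)) :=
    ((List.finRange n).filter (fun i => i ≠ i0)).map
      (fun i => ((0:ℝ), (some i : Option (Fin n)))) with htourMid
  set later : List (ℝ × Option (Fin n)) :=
    ((List.range (n-1)).reverse).map
      (fun (j : ℕ) => (((W+1:ℝ)) ^ (-(j:ℤ)), (some i0 : Option (Fin n)))) with hlater
  set S : List (ℝ × Option (Fin n)) :=
    (tourMid ++ [((0:ℝ), (some i0 : Option (Fin n)))]) ++ later with hS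
  -- basic facts about the pieces
  have htour_time : ∀ mv ∈ tourMid ++ [((0:ℝ), (some i0 : Option (Fin n)))], mv.1 = 0 := by
    intro mv hmv
    rcases List.mem_append.1 hmv with h | h
    · rcases List.mem_map.1 h with ⟨i, _, rfl⟩; rfl
    · simp at h; rw [h]
  have hlater_time_pos : ∀ mv ∈ later, 0 < mv.1 := by
    intro mv hmv
    rcases List.mem_map.1 hmv with ⟨j, _, rfl⟩
    exact zpow_pos hW1' _
  -- validity
  have hvalid : ValidSchedule S := by
    constructor
    · apply List.Pairwise.isChain
      rw [hS, List.pairwise_append]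
      refine ⟨?_, ?_, ?_⟩
      · apply List.Pairwise.imp (R := fun a b : ℝ × Option (Fin n) => a.1 = 0 ∧ b.1 = 0)
        · rintro a b ⟨ha, hb⟩; rw [ha, hb]
        · rw [List.pairwise_iff_forall_sublist]
          intro a b hsub
          have := htour_time
          have hma : a ∈ tourMid ++ [((0:ℝ), (some i0 : Option (Fin n)))] := by
            exact hsub.subset (by simp)
          have hmb : b ∈ tourMid ++ [((0:ℝ), (some i0 : Option (Fin n)))] := by
            exact hsub.subset (by simp)
          exact ⟨htour_time a hma, htour_time b hmb⟩
      · rw [hlater, List.pairwise_map, List.pairwise_reverse]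
        apply List.Pairwise.imp (R := (· < ·)) ?_ (List.pairwise_lt_range (n := _))
        intro a b hab
        exact zpow_le_zpow_right₀ hW1 (neg_le_neg (by exact_mod_cast hab.le))
      · intro a ha b hb
        rw [htour_time a ha]
        exact le_of_lt (hlater_time_pos b hb)
    · intro mv hmv
      rcases List.mem_append.1 hmv with h | h
      · rw [htour_time mv h]
      · exact le_of_lt (hlater_time_pos mv h)
  -- serving moves
  have hmem_mid : ((0:ℝ), (some i0 : Option (Fin n))) ∈ S := by
    rw [hS]; simp
  have hmem_tour : ∀ i : Fin n, (i:ℕ) ≠ 0 → ((0:ℝ), (some i : Option (Fin n))) ∈ S := by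
    intro i hi
    rw [hS]
    apply List.mem_append_left
    apply List.mem_append_left
    rw [htourMid]
    apply List.mem_map.2
    refine ⟨i, ?_, rfl⟩
    rw [List.mem_filter]
    refine ⟨List.mem_finRange i, ?_⟩
    simp only [decide_eq_true_eq]
    intro h
    exact hi (h ▸ hi0)
  have hmem_later : ∀ j : ℕ, j ≤ n - 2 →
      (((W+1:ℝ)) ^ (-(j:ℤ)), (some i0 : Option (Fin n))) ∈ S := by
    intro j hj
    rw [hS]
    apply List.mem_append_right
    rw [hlater]
    apply List.mem_map.2
    exact ⟨j, by simp [List.mem_reverse, List.mem_range]; omega, rfl⟩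
  -- each request has a serving move at exactly its arrival time
  have hserve : ∀ r ∈ I, ∃ mv ∈ S, mv.1 = r.arrival ∧ mv.2 = r.point := by
    intro r hr
    rcases (hI r).1 hr with ⟨i, hi1, hpt, harr, _⟩ | ⟨⟨i1, hi1, hpt⟩, _, harr⟩
    · exact ⟨((0:ℝ), some i), hmem_tour i (by omega), by rw [harr], by rw [hpt]⟩
    · have hii : i1 = i0 := Fin.ext (by rw [hi1, hi0])
      rcases harr with harr | ⟨j, hj, harr⟩
      · exact ⟨((0:ℝ), some i0), hmem_mid, by rw [harr], by rw [hpt, hii]⟩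
      · exact ⟨(((W+1:ℝ)) ^ (-(j:ℤ)), some i0), hmem_later j hj, by rw [harr],
          by rw [hpt, hii]⟩
  -- schedule serves all requests
  have hsched : IsSchedule I S := by
    refine ⟨hvalid, ?_⟩
    intro r hr
    obtain ⟨mv, hmv, ht, hp⟩ := hserve r hr
    exact ⟨mv, hmv, le_of_eq ht.symm, hp⟩
  refine ⟨S, hsched, ?_⟩
  -- delay penalties vanish
  have hpen : ∀ r ∈ I, r.penalty (serveTime S r - r.arrival) = 0 := by
    intro r hr
    obtain ⟨mv, hmv, ht, hp⟩ := hserve r hr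
    have hst : serveTime S r - r.arrival ≤ 0 :=
      sub_nonpos.2 (serveTime_le' S r mv hmv ht hp)
    have hmax : max (serveTime S r - r.arrival) 0 = 0 := max_eq_right hst
    rcases (hI r).1 hr with ⟨i, _, _, _, hpen⟩ | ⟨_, hpen, _⟩ <;>
      rw [hpen] <;> simp [hmax]
  -- movement cost
  have hdpp : starDist n W (some i0) (some i0) = 0 := by simp [starDist]
  have hmc : moveCost (starDist n W) (some i0) S ≤ 2 * ((n : ℝ) + W) - 1 := by
    rw [hS, moveCost_append' , moveCost_append']
    -- later part is 0
    have hlast : ((tourMid ++ [((0:ℝ), (some i0 : Option (Fin n)))]).foldl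
        (fun _ mv => mv.2) (some i0)) = some i0 := by
      simp [List.foldl_append]
    rw [hlast]
    have h0 : moveCost (starDist n W) (some i0) later = 0 := by
      apply moveCost_const _ _ hdpp
      intro mv hmv
      rcases List.mem_map.1 hmv with ⟨j, _, rfl⟩
      rfl
    rw [h0, add_zero]
    -- middle move
    have hmidP : starDist n W
        (tourMid.foldl (fun _ mv => mv.2) (some i0)) (some i0) ≤ W + 1 := by
      apply foldl_pt_prop (fun x => starDist n W x (some i0) ≤ W + 1)
      · rw [hdpp]; linarith
      · intro mv hmv
        rcases List.mem_map.1 hmv with ⟨i, hi, rfl⟩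
        have hine : i ≠ i0 := by
          have := (List.mem_filter.1 hi).2
          simpa using this
        have hival : (i:ℕ) ≠ 0 := fun h => hine (Fin.ext (by rw [h, hi0]))
        simp only [starDist, starVtr]
        rw [if_neg (by simp [hine]), if_neg hival, if_pos hi0]
        linarith
    have hmid : moveCost (starDist n W)
        (tourMid.foldl (fun _ mv => mv.2) (some i0))
        [((0:ℝ), (some i0 : Option (Fin n)))] ≤ W + 1 := by
      simpa [moveCost] using hmidP
    -- tour part
    have hlen : tourMid.length ≤ n - 1 := by
      rw [htourMid, List.length_map]
      have hlt : (((List.finRange n).filter (fun i => i ≠ i0)).length <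
          (List.finRange n).length) := by
        rw [List.length_filter_lt_length_iff_exists]
        exact ⟨i0, List.mem_finRange i0, by simp⟩
      rw [List.length_finRange] at hlt
      omega
    have hsum : (tourMid.map (fun mv => starVtr n W mv.2)).sum ≤ (n:ℝ) - 1 := by
      have : ∀ x ∈ tourMid.map (fun mv => starVtr n W mv.2), x = 1 := by
        intro x hx
        rcases List.mem_map.1 hx with ⟨mv, hmv, rfl⟩
        rcases List.mem_map.1 hmv with ⟨i, hi, rfl⟩
        have hine : i ≠ i0 := by simpa using (List.mem_filter.1 hi).2
        have hival : (i:ℕ) ≠ 0 := fun h => hine (Fin.ext (by rw [h, hi0]))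
        simp [starVtr, hival]
      rw [List.sum_eq_card_nsmul _ 1 this, nsmul_eq_mul, mul_one, List.length_map]
      have h1n : (1:ℕ) ≤ n := by omega
      calc ((tourMid.length : ℝ))
          ≤ ((n - 1 : ℕ) : ℝ) := by exact_mod_cast hlen
        _ ≤ (n:ℝ) - 1 := by
            rw [Nat.cast_sub h1n]
            norm_num
    have htourcost := moveCost_star_le n W hW0 tourMid (some i0)
    have hvtr0 : starVtr n W (some i0) = W := by simp [starVtr, hi0]
    rw [hvtr0] at htourcost
    have hcast : (2:ℝ) ≤ (n:ℝ) := by exact_mod_cast hn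
    linarith
  rw [schedCost]
  rw [Finset.sum_eq_zero hpen]
  linarith
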